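/- Fix integers n ≥ 2, N ≥ 1 and m ≥ 1, an open connected set Ω ⊆ (Fin n → ℂ) on which the coordinate functions λ₁,…,λ_n are pairwise distinct, and differentiable functions A_j : Ω → Matrix (Fin N) (Fin N) ℂ satisfying the Schlesinger system on Ω: ∂A_j/∂λ_k = [A_j,A_k]/(λ_j−λ_k) for j ≠ k and ∂A_j/∂λ_j = −Σ_{k≠j}[A_j,A_k]/(λ_j−λ_k). Then for every j, the function x ↦ tr((A_j(x))^m) is constant on Ω (all its partial derivatives vanish identically). -/

import Mathlib

attribute [local instance] Matrix.normedAddCommGroup Matrix.normedSpace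

/-- Partial derivative (in the `k`-th coordinate) of a function of `n` complex variables. -/
noncomputable def pdv {n : ℕ} {E : Type*} [NormedAddCommGroup E] [NormedSpace ℂ E]
    (k : Fin n) (f : (Fin n → ℂ) → E) (x : Fin n → ℂ) : E :=
  deriv (fun t : ℂ => f (Function.update x k t)) (x k)

section Aux

variable {N : ℕ}

local notation "M" => Matrix (Fin N) (Fin N) ℂ

lemma mat_mul_bilinear : IsBoundedBilinearMap ℂ (fun p : M × M => p.1 * p.2) where
  add_left x₁ x₂ y := add_mul x₁ x₂ y
  smul_left c x y := smul_mul_assoc c x y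
  add_right x y₁ y₂ := mul_add x y₁ y₂
  smul_right c x y := mul_smul_comm c x y
  bound := by
    refine ⟨N + 1, by positivity, fun X Y => ?_⟩
    rcases eq_or_lt_of_le (norm_nonneg X) with hX | hX
    · have : X = 0 := by simpa using (norm_eq_zero.mp hX.symm)
      simp [this]
    rcases eq_or_lt_of_le (norm_nonneg Y) with hY | hY
    · have : Y = 0 := by simpa using (norm_eq_zero.mp hY.symm)
      simp [this]
    rw [show ((N : ℝ) + 1) * ‖X‖ * ‖Y‖ = ((N : ℝ) + 1) * (‖X‖ * ‖Y‖) by ring]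
    refine (pi_norm_le_iff_of_nonneg (by positivity)).mpr fun i => ?_
    refine (pi_norm_le_iff_of_nonneg (by positivity)).mpr fun j => ?_
    calc ‖(X * Y) i j‖ = ‖∑ k, X i k * Y k j‖ := by rw [Matrix.mul_apply]
      _ ≤ ∑ k, ‖X i k * Y k j‖ := norm_sum_le _ _
      _ ≤ ∑ _k : Fin N, ‖X‖ * ‖Y‖ := by
          refine Finset.sum_le_sum fun k _ => ?_
          rw [norm_mul]
          exact mul_le_mul (X.norm_entry_le_entrywise_sup_norm)
            (Y.norm_entry_le_entrywise_sup_norm) (norm_nonneg _) (norm_nonneg _)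
      _ ≤ ((N : ℝ) + 1) * (‖X‖ * ‖Y‖) := by
          simp only [Finset.sum_const, Finset.card_univ, Fintype.card_fin, nsmul_eq_mul]
          exact mul_le_mul_of_nonneg_right (by linarith) (by positivity)

lemma hasDerivAt_matMul {f g : ℂ → M} {f' g' : M} {t : ℂ}
    (hf : HasDerivAt f f' t) (hg : HasDerivAt g g' t) :
    HasDerivAt (fun s => f s * g s) (f t * g' + f' * g t) t := by
  have h := (mat_mul_bilinear.hasFDerivAt (f t, g t)).comp_hasDerivAt t (hf.prodMk hg)
  simp at h
  exact h

lemma hasDerivAt_matPow {g : ℂ → M} {D : M} {t : ℂ} (hg : HasDerivAt g D t) (m : ℕ) :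
    HasDerivAt (fun s => g s ^ m)
      (∑ i ∈ Finset.range m, g t ^ i * D * g t ^ (m - 1 - i)) t := by
  induction m with
  | zero =>
    simp only [pow_zero, Finset.range_zero, Finset.sum_empty]
    exact hasDerivAt_const t (1 : M)
  | succ m ih =>
      have h := hasDerivAt_matMul ih hg
      have heq : (fun s => g s ^ m * g s) = fun s => g s ^ (m + 1) := by
        funext s; rw [pow_succ]
      rw [heq] at h
      convert h using 1
      rw [Finset.sum_range_succ, Finset.sum_mul]
      have h1 : ∀ i ∈ Finset.range m,
          g t ^ i * D * g t ^ (m - 1 - i) * g t = g t ^ i * D * g t ^ (m + 1 - 1 - i) := by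
        intro i hi
        rw [Finset.mem_range] at hi
        have hidx : m - 1 - i + 1 = m + 1 - 1 - i := by omega
        rw [mul_assoc, ← pow_succ, hidx]
      rw [Finset.sum_congr rfl h1]
      have h2 : g t ^ m * D * g t ^ (m + 1 - 1 - m) = g t ^ m * D := by
        simp
      rw [h2, add_comm]

noncomputable def trCLM : M →L[ℂ] ℂ :=
  LinearMap.toContinuousLinearMap (Matrix.traceLinearMap (Fin N) ℂ ℂ)

@[simp] lemma trCLM_apply (X : M) : trCLM X = X.trace := rfl

lemma hasDerivAt_updateLine {n : ℕ} {E : Type*} [NormedAddCommGroup E] [NormedSpace ℂ E]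
    {f : (Fin n → ℂ) → E} {x : Fin n → ℂ} (hf : DifferentiableAt ℂ f x) (k : Fin n) :
    HasDerivAt (fun t : ℂ => f (Function.update x k t))
      (fderiv ℂ f x (Pi.single k 1)) (x k) := by
  have hcurve : HasDerivAt (fun t : ℂ => x + (t - x k) • (Pi.single k 1 : Fin n → ℂ))
      (Pi.single k 1 : Fin n → ℂ) (x k) := by
    simpa using (((hasDerivAt_id (x k)).sub_const (x k)).smul_const
      (Pi.single k 1 : Fin n → ℂ)).const_add x
  have hx' : x + ((x k) - x k) • (Pi.single k 1 : Fin n → ℂ) = x := by simp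
  have hF : HasFDerivAt f (fderiv ℂ f x) (x + ((x k) - x k) • (Pi.single k 1 : Fin n → ℂ)) := by
    rw [hx']; exact hf.hasFDerivAt
  have h := hF.comp_hasDerivAt (x k) hcurve
  have heq : (fun t : ℂ => f (x + (t - x k) • (Pi.single k 1 : Fin n → ℂ)))
      = fun t : ℂ => f (Function.update x k t) := by
    funext t
    congr 1
    funext i
    by_cases hik : i = k
    · subst hik; simp
    · simp [Function.update_of_ne hik, Pi.single_eq_of_ne hik]
  rw [← heq]
  exact h

lemma pdv_eq_fderiv {n : ℕ} {E : Type*} [NormedAddCommGroup E] [NormedSpace ℂ E]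
    {f : (Fin n → ℂ) → E} {x : Fin n → ℂ} (hf : DifferentiableAt ℂ f x) (k : Fin n) :
    deriv (fun t : ℂ => f (Function.update x k t)) (x k) = fderiv ℂ f x (Pi.single k 1) :=
  (hasDerivAt_updateLine hf k).deriv

lemma trace_pow_comm (C B : M) {m : ℕ} (hm : 1 ≤ m) :
    (C ^ (m - 1) * (C * B - B * C)).trace = 0 := by
  rw [mul_sub, Matrix.trace_sub, ← mul_assoc, ← pow_succ, Nat.sub_add_cancel hm,
    ← mul_assoc, Matrix.trace_mul_comm (C ^ (m - 1) * B) C, ← mul_assoc, ← pow_succ',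
    Nat.sub_add_cancel hm, sub_self]

end Aux

/-- Along solutions of the Schlesinger system on a connected open set Ω, each
function `x ↦ tr((A_j(x))^m)` is constant on Ω: all its partial derivatives
vanish identically (the spectral data of the residues is preserved). -/
theorem trace_powers_constant {n N m : ℕ} (hn : 2 ≤ n) (hN : 1 ≤ N) (hm : 1 ≤ m)
    (Ω : Set (Fin n → ℂ)) (hΩ : IsOpen Ω) (hconn : IsConnected Ω)
    (hdist : ∀ x ∈ Ω, ∀ j k : Fin n, j ≠ k → x j ≠ x k)
    (A : Fin n → (Fin n → ℂ) → Matrix (Fin N) (Fin N) ℂ)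
    (hA : ∀ j, DifferentiableOn ℂ (A j) Ω)
    (hSch₁ : ∀ x ∈ Ω, ∀ j k : Fin n, j ≠ k →
      pdv k (A j) x = (x j - x k)⁻¹ • (A j x * A k x - A k x * A j x))
    (hSch₂ : ∀ x ∈ Ω, ∀ j : Fin n,
      pdv j (A j) x = -∑ k ∈ Finset.univ \ {j},
        (x j - x k)⁻¹ • (A j x * A k x - A k x * A j x)) :
    ∀ j : Fin n,
      (∀ x ∈ Ω, ∀ k : Fin n, pdv k (fun y => ((A j y) ^ m).trace) x = 0) ∧
      (∀ x ∈ Ω, ∀ y ∈ Ω, ((A j x) ^ m).trace = ((A j y) ^ m).trace) := by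
  intro j
  set F : (Fin n → ℂ) → ℂ := fun y => ((A j y) ^ m).trace with hF
  -- key trace identity
  have hkey : ∀ x ∈ Ω, ∀ k : Fin n,
      ((A j x) ^ (m - 1) * pdv k (A j) x).trace = 0 := by
    intro x hx k
    by_cases hjk : k = j
    · subst hjk
      rw [hSch₂ x hx k, mul_neg, Matrix.trace_neg, Matrix.mul_sum, Matrix.trace_sum]
      rw [neg_eq_zero]
      refine Finset.sum_eq_zero fun i hi => ?_
      rw [mul_smul_comm, Matrix.trace_smul, trace_pow_comm _ _ hm, smul_zero]
    · rw [hSch₁ x hx j k (fun h => hjk h.symm), mul_smul_comm, Matrix.trace_smul,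
        trace_pow_comm _ _ hm, smul_zero]
  -- all partial derivatives vanish
  have hpdv : ∀ x ∈ Ω, ∀ k : Fin n, pdv k F x = 0 := by
    intro x hx k
    have hdiff : DifferentiableAt ℂ (A j) x := (hA j).differentiableAt (hΩ.mem_nhds hx)
    have hline : HasDerivAt (fun t : ℂ => A j (Function.update x k t))
        (pdv k (A j) x) (x k) := by
      have := hasDerivAt_updateLine hdiff k
      rwa [show pdv k (A j) x = fderiv ℂ (A j) x (Pi.single k 1) from pdv_eq_fderiv hdiff k]
    have hpow := hasDerivAt_matPow hline m
    rw [Function.update_eq_self] at hpow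
    set C := A j x with hC
    set D := pdv k (A j) x with hD
    have htr : HasDerivAt (fun t : ℂ => F (Function.update x k t))
        ((∑ i ∈ Finset.range m, C ^ i * D * C ^ (m - 1 - i)).trace) (x k) := by
      have h := (trCLM (N := N)).hasFDerivAt.comp_hasDerivAt (x k) hpow
      exact h
    have : pdv k F x = (∑ i ∈ Finset.range m, C ^ i * D * C ^ (m - 1 - i)).trace :=
      htr.deriv
    rw [this, Matrix.trace_sum]
    refine Finset.sum_eq_zero fun i hi => ?_
    rw [Finset.mem_range] at hi
    rw [Matrix.trace_mul_comm (C ^ i * D) (C ^ (m - 1 - i)), ← mul_assoc, ← pow_add]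
    rw [show m - 1 - i + i = m - 1 by omega]
    exact hkey x hx k
  refine ⟨hpdv, ?_⟩
  -- F is differentiable on Ω
  have hpowdiff : ∀ m' : ℕ, DifferentiableOn ℂ (fun y => (A j y) ^ m') Ω := by
    intro m'
    induction m' with
    | zero => simpa using differentiableOn_const (1 : Matrix (Fin N) (Fin N) ℂ)
    | succ m' ih =>
        intro y hy
        have h := (mat_mul_bilinear.hasFDerivAt ((A j y) ^ m', A j y)).differentiableAt
        have h2 := h.comp_differentiableWithinAt y ((ih y hy).prodMk ((hA j) y hy))
        have heq : (fun p : Matrix (Fin N) (Fin N) ℂ × Matrix (Fin N) (Fin N) ℂ =>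
            p.1 * p.2) ∘ (fun z => ((A j z) ^ m', A j z)) = fun z => (A j z) ^ (m' + 1) := by
          funext z; simp [Function.comp, pow_succ]
        rwa [heq] at h2
  have hFdiff : DifferentiableOn ℂ F Ω := by
    have h := (trCLM (N := N)).differentiable.comp_differentiableOn (hpowdiff m)
    exact h
  -- the full Fréchet derivative vanishes on Ω
  have hfd0 : ∀ y ∈ Ω, fderiv ℂ F y = 0 := by
    intro y hy
    have hdF : DifferentiableAt ℂ F y := hFdiff.differentiableAt (hΩ.mem_nhds hy)
    ext v
    have hv : v = ∑ k : Fin n, Pi.single k (v k) := (Finset.univ_sum_single v).symm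
    rw [hv, map_sum]
    simp only [ContinuousLinearMap.zero_apply]
    refine Finset.sum_eq_zero fun k _ => ?_
    have hsingle : (Pi.single k (v k) : Fin n → ℂ) = v k • (Pi.single k 1 : Fin n → ℂ) := by
      funext i
      by_cases hik : i = k
      · subst hik; simp
      · simp [Pi.single_eq_of_ne hik]
    rw [hsingle, map_smul, ← pdv_eq_fderiv hdF k]
    have : pdv k F y = 0 := hpdv y hy k
    rw [pdv] at this
    rw [this, smul_zero]
  -- constancy via connectedness
  intro x hx y hy
  -- constant on any ball inside Ω
  have hball : ∀ z ∈ Ω, ∀ ε > 0, Metric.ball z ε ⊆ Ω → ∀ w ∈ Metric.ball z ε, F w = F z := by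
    intro z hz ε hε hsub w hw
    refine Convex.is_const_of_fderivWithin_eq_zero (convex_ball z ε)
      (hFdiff.mono hsub) (fun p hp => ?_) hw (Metric.mem_ball_self hε)
    rw [fderivWithin_of_isOpen Metric.isOpen_ball hp]
    exact hfd0 p (hsub hp)
  set u : Set (Fin n → ℂ) := {z ∈ Ω | F z = F x} with hu
  set v' : Set (Fin n → ℂ) := {z ∈ Ω | F z ≠ F x} with hv'
  have hopen : ∀ (P : ℂ → Prop), IsOpen {z ∈ Ω | P (F z)} := by
    intro P
    rw [Metric.isOpen_iff]
    rintro z ⟨hz, hPz⟩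
    obtain ⟨ε, hε, hsub⟩ := Metric.isOpen_iff.mp hΩ z hz
    exact ⟨ε, hε, fun w hw => ⟨hsub hw, by rw [hball z hz ε hε hsub w hw]; exact hPz⟩⟩
  have hFy : F y = F x := by
    by_contra hne
    obtain ⟨p, hpΩ, hp1, hp2⟩ := hconn.isPreconnected {z ∈ Ω | F z = F x}
      {z ∈ Ω | F z ≠ F x} (hopen (fun c => c = F x))
      (hopen (fun c => c ≠ F x)) (fun z hz => by
        by_cases h : F z = F x
        · exact Or.inl ⟨hz, h⟩
        · exact Or.inr ⟨hz, h⟩)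
      ⟨x, hx, hx, rfl⟩ ⟨y, hy, hy, hne⟩
    exact hp2.2 hp1.2
  have hFx : F x = F x := rfl
  simpa [hF] using hFy.symm
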